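/- With notation as in the planar screw displacement construction (n₁ ≠ ±n₂, θ = arccos(n₁·n₂), L, R = I + sin(θ)L + (1-cos θ)L², x⃗ = x₂-x₁, x⃗_∥ projection of x⃗ onto span{n₁,n₂}, x_m = (x₁+x₂)/2, c = x_m + (1/2)cot(θ/2)L x⃗_∥), the identity (I - R)(c - x₁) = x⃗_∥ holds, i.e., the rotation about center c accounts exactly for the in-plane displacement. -/

import Mathlib

open Matrix

lemma dp_self_nonneg (v : Fin 3 → ℝ) : 0 ≤ v ⬝ᵥ v :=
  Finset.sum_nonneg fun i _ => mul_self_nonneg _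


lemma vecMulVec_mulVec_eq {w v x : Fin 3 → ℝ} :
    (vecMulVec w v).mulVec x = (v ⬝ᵥ x) • w := by
  ext i
  simp [vecMulVec, mulVec, dotProduct, Finset.mul_sum, mul_comm, mul_left_comm]

lemma rotation_aux (x₁ n₁ x₂ n₂ : Fin 3 → ℝ)
    (hn₁ : n₁ ⬝ᵥ n₁ = 1) (hn₂ : n₂ ⬝ᵥ n₂ = 1)
    (xpar : Fin 3 → ℝ)
    (hpar : xpar ∈ Submodule.span ℝ {n₁, n₂})
    (hperp₁ : ((x₂ - x₁) - xpar) ⬝ᵥ n₁ = 0)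
    (hperp₂ : ((x₂ - x₁) - xpar) ⬝ᵥ n₂ = 0)
    (d s k : ℝ) (hdd : d = n₁ ⬝ᵥ n₂) (hs0 : s ≠ 0)
    (hs2 : s ^ 2 = 1 - d ^ 2)
    (hk1 : (1 - d) * k = s / 2) (hk2 : s * k = (1 + d) / 2) :
    ((1 : Matrix (Fin 3) (Fin 3) ℝ) - ((1 : Matrix (Fin 3) (Fin 3) ℝ)
      + s • (s⁻¹ • (vecMulVec n₂ n₁ - vecMulVec n₁ n₂))
      + (1 - d) • ((s⁻¹ • (vecMulVec n₂ n₁ - vecMulVec n₁ n₂))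
          * (s⁻¹ • (vecMulVec n₂ n₁ - vecMulVec n₁ n₂))))).mulVec
      (((2 : ℝ)⁻¹ • (x₁ + x₂)
        + k • (s⁻¹ • (vecMulVec n₂ n₁ - vecMulVec n₁ n₂)).mulVec xpar) - x₁)
      = xpar := by
  set L : Matrix (Fin 3) (Fin 3) ℝ := s⁻¹ • (vecMulVec n₂ n₁ - vecMulVec n₁ n₂) with hL
  have key : ∀ v : Fin 3 → ℝ, L.mulVec v
      = s⁻¹ • ((n₁ ⬝ᵥ v) • n₂ - (n₂ ⬝ᵥ v) • n₁) := by
    intro v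
    rw [hL, smul_mulVec, sub_mulVec, vecMulVec_mulVec_eq, vecMulVec_mulVec_eq]
  obtain ⟨a, b, hab⟩ := Submodule.mem_span_pair.mp hpar
  have hd1x : n₁ ⬝ᵥ xpar = a + b * d := by
    rw [← hab]
    simp only [dotProduct_add, dotProduct_smul, hn₁, dotProduct_comm n₂ n₁, ← hdd, smul_eq_mul]
    ring
  have hd2x : n₂ ⬝ᵥ xpar = a * d + b := by
    rw [← hab]
    simp only [dotProduct_add, dotProduct_smul, hn₂, dotProduct_comm n₂ n₁, ← hdd, smul_eq_mul]
    ring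
  set u : Fin 3 → ℝ := L.mulVec xpar with huu
  have hu : u = s⁻¹ • ((a + b * d) • n₂ - (a * d + b) • n₁) := by
    rw [huu, key, hd1x, hd2x]
  have hd1u : n₁ ⬝ᵥ u = s⁻¹ * ((a + b * d) * d - (a * d + b)) := by
    rw [hu]
    simp only [dotProduct_smul, dotProduct_sub, hn₁, dotProduct_comm n₂ n₁, ← hdd, smul_eq_mul]
    ring
  have hd2u : n₂ ⬝ᵥ u = s⁻¹ * ((a + b * d) - (a * d + b) * d) := by
    rw [hu]
    simp only [dotProduct_smul, dotProduct_sub, hn₂, dotProduct_comm n₂ n₁, ← hdd, smul_eq_mul]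
    ring
  have hLu : L.mulVec u = -xpar := by
    rw [key, hd1u, hd2u, ← hab]
    match_scalars
    · field_simp
      first
      | linear_combination a * hs2
      | linear_combination b * hs2
      | linear_combination (-a) * hs2
      | linear_combination (-b) * hs2
      | linear_combination (2*a - 2*b) * hs2
      | linear_combination (2*b - 2*a) * hs2
      | linear_combination (a - b) * hs2
      | linear_combination (b - a) * hs2
    · field_simp
      first
      | linear_combination b * hs2
      | linear_combination a * hs2
      | linear_combination (-b) * hs2
      | linear_combination (-a) * hs2
      | linear_combination (2*b - 2*a) * hs2
      | linear_combination (2*a - 2*b) * hs2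
      | linear_combination (b - a) * hs2
      | linear_combination (a - b) * hs2
  have hLw : L.mulVec ((x₂ - x₁) - xpar) = 0 := by
    rw [key, dotProduct_comm n₁ _, dotProduct_comm n₂ _, hperp₁, hperp₂]
    simp
  have hLv : L.mulVec (x₂ - x₁) = u := by
    have h : (x₂ - x₁) = ((x₂ - x₁) - xpar) + xpar := by abel
    rw [h, mulVec_add, hLw, ← huu]
    simp
  have hcx : ((2 : ℝ)⁻¹ • (x₁ + x₂) + k • u) - x₁ = (2 : ℝ)⁻¹ • (x₂ - x₁) + k • u := by
    match_scalars <;> ring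
  have h1 : L.mulVec ((2 : ℝ)⁻¹ • (x₂ - x₁) + k • u) = (2:ℝ)⁻¹ • u - k • xpar := by
    rw [mulVec_add, mulVec_smul, mulVec_smul, hLv, hLu]
    module
  have h2 : L.mulVec ((2:ℝ)⁻¹ • u - k • xpar) = -((2:ℝ)⁻¹ • xpar) - k • u := by
    rw [mulVec_sub, mulVec_smul, mulVec_smul, hLu, ← huu]
    module
  have hR : ((1 : Matrix (Fin 3) (Fin 3) ℝ) - ((1 : Matrix (Fin 3) (Fin 3) ℝ) + s • L
      + (1 - d) • (L * L))) = -(s • L) - (1 - d) • (L * L) := by abel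
  have h1' : (s • L) *ᵥ ((2 : ℝ)⁻¹ • (x₂ - x₁) + k • u) = s • ((2:ℝ)⁻¹ • u - k • xpar) := by
    rw [smul_mulVec, h1]
  have h2' : ((1 - d) • (L * L)) *ᵥ ((2 : ℝ)⁻¹ • (x₂ - x₁) + k • u)
      = (1 - d) • (-((2:ℝ)⁻¹ • xpar) - k • u) := by
    rw [smul_mulVec, ← mulVec_mulVec, h1, h2]
  rw [hR, sub_mulVec, neg_mulVec, hcx, h1', h2']
  match_scalars
  <;> first
    | linear_combination hk1
    | linear_combination hk2
    | linear_combination -2 * hk1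
    | linear_combination -2 * hk2

/-- The rotation about the center `c = x_m + (1/2)cot(θ/2) L x⃗_∥` accounts
exactly for the in-plane displacement: `(I - R)(c - x₁) = x⃗_∥`. -/
theorem rotation_center_in_plane_displacement
    (x₁ n₁ x₂ n₂ : Fin 3 → ℝ)
    (hn₁ : n₁ ⬝ᵥ n₁ = 1) (hn₂ : n₂ ⬝ᵥ n₂ = 1)
    (hne : n₁ ≠ n₂) (hne' : n₁ ≠ -n₂)
    (xpar : Fin 3 → ℝ)
    (hpar : xpar ∈ Submodule.span ℝ {n₁, n₂})
    (hperp₁ : ((x₂ - x₁) - xpar) ⬝ᵥ n₁ = 0)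
    (hperp₂ : ((x₂ - x₁) - xpar) ⬝ᵥ n₂ = 0) :
    let θ := Real.arccos (n₁ ⬝ᵥ n₂)
    let L := (Real.sin θ)⁻¹ • (vecMulVec n₂ n₁ - vecMulVec n₁ n₂)
    let R := (1 : Matrix (Fin 3) (Fin 3) ℝ) + Real.sin θ • L
      + (1 - Real.cos θ) • (L * L)
    let xm := (2 : ℝ)⁻¹ • (x₁ + x₂)
    let c := xm + ((2 : ℝ)⁻¹ * (Real.cos (θ / 2) / Real.sin (θ / 2))) •
      L.mulVec xpar
    ((1 : Matrix (Fin 3) (Fin 3) ℝ) - R).mulVec (c - x₁) = xpar := by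
  intro θ L R xm c
  have hdd : Real.cos θ = n₁ ⬝ᵥ n₂ := by
    refine Real.cos_arccos ?_ ?_
    · have h0 : (n₁ + n₂) ⬝ᵥ (n₁ + n₂) ≠ 0 := by
        intro h
        exact hne' (by linear_combination (norm := abel) dotProduct_self_eq_zero.mp h)
      have h1 : 0 < (n₁ + n₂) ⬝ᵥ (n₁ + n₂) := lt_of_le_of_ne (dp_self_nonneg _) (Ne.symm h0)
      have hadd : (n₁ + n₂) ⬝ᵥ (n₁ + n₂) = 2 + 2 * (n₁ ⬝ᵥ n₂) := by
        simp only [add_dotProduct, dotProduct_add, hn₁, hn₂, dotProduct_comm n₂ n₁]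
        ring
      rw [hadd] at h1; linarith
    · have h0 : (n₁ - n₂) ⬝ᵥ (n₁ - n₂) ≠ 0 :=
        fun h => (sub_ne_zero.mpr hne) (dotProduct_self_eq_zero.mp h)
      have h1 : 0 < (n₁ - n₂) ⬝ᵥ (n₁ - n₂) := lt_of_le_of_ne (dp_self_nonneg _) (Ne.symm h0)
      have hsub : (n₁ - n₂) ⬝ᵥ (n₁ - n₂) = 2 - 2 * (n₁ ⬝ᵥ n₂) := by
        simp only [sub_dotProduct, dotProduct_sub, hn₁, hn₂, dotProduct_comm n₂ n₁]
        ring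
      rw [hsub] at h1; linarith
  set d : ℝ := Real.cos θ with hdc
  have hd1 : d < 1 := by
    have h0 : (n₁ - n₂) ⬝ᵥ (n₁ - n₂) ≠ 0 :=
      fun h => (sub_ne_zero.mpr hne) (dotProduct_self_eq_zero.mp h)
    have h1 : 0 < (n₁ - n₂) ⬝ᵥ (n₁ - n₂) := lt_of_le_of_ne (dp_self_nonneg _) (Ne.symm h0)
    have hsub : (n₁ - n₂) ⬝ᵥ (n₁ - n₂) = 2 - 2 * d := by
      simp only [sub_dotProduct, dotProduct_sub, hn₁, hn₂, dotProduct_comm n₂ n₁, ← hdd]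
      ring
    rw [hsub] at h1; linarith
  have hd2 : -1 < d := by
    have h0 : (n₁ + n₂) ⬝ᵥ (n₁ + n₂) ≠ 0 := by
      intro h
      exact hne' (by linear_combination (norm := abel) dotProduct_self_eq_zero.mp h)
    have h1 : 0 < (n₁ + n₂) ⬝ᵥ (n₁ + n₂) := lt_of_le_of_ne (dp_self_nonneg _) (Ne.symm h0)
    have hadd : (n₁ + n₂) ⬝ᵥ (n₁ + n₂) = 2 + 2 * d := by
      simp only [add_dotProduct, dotProduct_add, hn₁, hn₂, dotProduct_comm n₂ n₁, ← hdd]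
      ring
    rw [hadd] at h1; linarith
  set s : ℝ := Real.sin θ with hss
  have hθ0 : 0 < θ := Real.arccos_pos.mpr (by rw [← hdd]; exact hd1)
  have hθπ : θ ≤ Real.pi := Real.arccos_le_pi _
  have hs : 0 < s := by
    rw [hss, show θ = Real.arccos (n₁ ⬝ᵥ n₂) from rfl, Real.sin_arccos]
    refine Real.sqrt_pos.mpr ?_
    rw [← hdd]
    nlinarith
  have hs0 : s ≠ 0 := hs.ne'
  have hs2 : s ^ 2 = 1 - d ^ 2 := by
    have h := Real.sin_sq_add_cos_sq θ
    rw [← hss, ← hdc] at h; linarith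
  have hsh : Real.sin (θ / 2) ≠ 0 :=
    (Real.sin_pos_of_pos_of_lt_pi (by linarith) (by nlinarith [Real.pi_pos])).ne'
  have h2s : s = 2 * Real.sin (θ / 2) * Real.cos (θ / 2) := by
    have h := Real.sin_two_mul (θ/2)
    rw [show 2 * (θ/2) = θ by ring] at h
    rw [hss, h]
  have h2c : 1 - d = 2 * Real.sin (θ / 2) ^ 2 := by
    have h := Real.cos_two_mul (θ/2)
    rw [show 2 * (θ/2) = θ by ring, ← hdc] at h
    nlinarith [Real.sin_sq_add_cos_sq (θ/2)]
  set k : ℝ := (2 : ℝ)⁻¹ * (Real.cos (θ / 2) / Real.sin (θ / 2)) with hkk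
  have hk1 : (1 - d) * k = s / 2 := by
    rw [hkk, h2c, h2s]; field_simp
  have hk2 : s * k = (1 + d) / 2 := by
    have hd1' : (1 - d) ≠ 0 := by
      intro h'
      have : (0:ℝ) < 1 - d := by linarith
      linarith
    have h : (1 - d) * (s * k) = (1 - d) * ((1 + d) / 2) := by
      rw [show (1 - d) * (s * k) = s * ((1 - d) * k) by ring, hk1]
      nlinarith [hs2]
    exact mul_left_cancel₀ hd1' h
  exact rotation_aux x₁ n₁ x₂ n₂ hn₁ hn₂ xpar hpar hperp₁ hperp₂ d s k hdd hs0 hs2 hk1 hk2
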